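/- Under the assumptions that S ⪰ 0 has positive diagonal and Λ has positive off-diagonal entries, the function f(X) = −log det X + tr(SX) + ‖X‖_{1,Λ} has a unique minimizer X* over the cone of symmetric positive definite matrices. -/

import Mathlib

open Matrix BigOperators

variable {n : Type*} [Fintype n] [DecidableEq n]

lemma real_spectral {A : Matrix n n ℝ} (hA : A.IsHermitian) :
    A = hA.eigenvectorUnitary.1 * diagonal hA.eigenvalues * star hA.eigenvectorUnitary.1 := by
  have := hA.spectral_theorem
  simpa [RCLike.ofReal_real_eq_id] using this

lemma trace_eq_sum_eig {A : Matrix n n ℝ} (hA : A.IsHermitian) :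
    A.trace = ∑ i, hA.eigenvalues i := by
  conv_lhs => rw [real_spectral hA]
  rw [Matrix.trace_mul_cycle]
  have h1 : (star hA.eigenvectorUnitary.1) * hA.eigenvectorUnitary.1 = 1 :=
    (Matrix.mem_unitaryGroup_iff').mp hA.eigenvectorUnitary.2
  rw [h1, Matrix.one_mul, Matrix.trace_diagonal]

lemma unitary_conj_smul_one (U : Matrix.unitaryGroup n ℝ) (α : ℝ) :
    (U : Matrix n n ℝ) * (α • 1) * star (U : Matrix n n ℝ) = α • 1 := by
  have h1 : (U : Matrix n n ℝ) * star (U : Matrix n n ℝ) = 1 :=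
    (Matrix.mem_unitaryGroup_iff).mp U.2
  rw [Matrix.mul_smul, Matrix.mul_one, Matrix.smul_mul, h1]

lemma sub_smul_one_posSemidef {A : Matrix n n ℝ} (hA : A.IsHermitian) {α : ℝ}
    (h : ∀ i, α ≤ hA.eigenvalues i) : (A - α • 1).PosSemidef := by
  have key : A - α • 1 = hA.eigenvectorUnitary.1 *
      diagonal (fun i => hA.eigenvalues i - α) * star hA.eigenvectorUnitary.1 := by
    conv_lhs => rw [real_spectral hA, ← unitary_conj_smul_one hA.eigenvectorUnitary α]
    rw [← Matrix.sub_mul, ← Matrix.mul_sub, Matrix.smul_one_eq_diagonal, Matrix.diagonal_sub]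
  rw [key]
  have : (diagonal (fun i => hA.eigenvalues i - α)).PosSemidef :=
    Matrix.posSemidef_diagonal_iff.mpr (fun i => sub_nonneg.mpr (h i))
  exact this.mul_mul_conjTranspose_same hA.eigenvectorUnitary.1

lemma posdef_conj {A B : Matrix n n ℝ} (hA : A.PosDef) (hB : IsUnit B.det) :
    (B * A * Bᴴ).PosDef := by
  refine Matrix.PosDef.of_dotProduct_mulVec_pos
    (Matrix.isHermitian_mul_mul_conjTranspose B hA.1) fun x hx => ?_
  have hx' : Bᴴ *ᵥ x ≠ 0 := by
    intro h
    apply hx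
    have hBH : IsUnit (Bᴴ).det := by simpa [Matrix.det_conjTranspose] using hB.star
    have := Matrix.mulVec_injective_iff_isUnit.mpr ((Matrix.isUnit_iff_isUnit_det _).mpr hBH)
    exact this (by simpa using h)
  have := hA.dotProduct_mulVec_pos hx'
  simpa only [star_mulVec, Matrix.dotProduct_mulVec, Matrix.vecMul_vecMul,
    Matrix.mul_assoc, Matrix.conjTranspose_conjTranspose] using this

noncomputable def Matrix.PosSemidef.sqrt {A : Matrix n n ℝ} (hA : A.PosSemidef) : Matrix n n ℝ :=
  hA.1.eigenvectorUnitary.1 * diagonal ((RCLike.ofReal : ℝ → ℝ) ∘ Real.sqrt ∘ hA.1.eigenvalues) *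
    star hA.1.eigenvectorUnitary.1

lemma Matrix.PosSemidef.sqrt_mul_self {A : Matrix n n ℝ} (hA : A.PosSemidef) :
    hA.sqrt * hA.sqrt = A := by
  have h1 : (star hA.1.eigenvectorUnitary.1) * hA.1.eigenvectorUnitary.1 = 1 :=
    (Matrix.mem_unitaryGroup_iff').mp hA.1.eigenvectorUnitary.2
  conv_rhs => rw [real_spectral hA.1]
  unfold Matrix.PosSemidef.sqrt
  rw [show ∀ U D V : Matrix n n ℝ, U * D * V * (U * D * V) = U * D * (V * U) * D * V from
    fun U D V => by simp only [Matrix.mul_assoc], h1, Matrix.mul_one,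
    Matrix.mul_assoc (hA.1.eigenvectorUnitary.1 : Matrix n n ℝ), Matrix.diagonal_mul_diagonal]
  congr 2
  refine congrArg diagonal (funext fun i => ?_)
  simp only [Function.comp_apply, RCLike.ofReal_real_eq_id, id_eq]
  exact Real.mul_self_sqrt (hA.eigenvalues_nonneg i)

lemma Matrix.PosSemidef.sqrt_conjTranspose {A : Matrix n n ℝ} (hA : A.PosSemidef) :
    hA.sqrtᴴ = hA.sqrt := by
  simp [Matrix.PosSemidef.sqrt, Matrix.conjTranspose_mul, Matrix.mul_assoc,
    Matrix.star_eq_conjTranspose]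

lemma posDef_sqrt {X : Matrix n n ℝ} (hX : X.PosDef) : hX.posSemidef.sqrt.PosDef := by
  rw [Matrix.PosSemidef.sqrt]
  apply posdef_conj
  · refine Matrix.posDef_diagonal_iff.mpr fun i => ?_
    simp only [Function.comp_apply, RCLike.ofReal_real_eq_id, id_eq]
    exact Real.sqrt_pos.mpr (hX.eigenvalues_pos i)
  · exact Matrix.UnitaryGroup.det_isUnit _

lemma det_eq_prod_eig {A : Matrix n n ℝ} (hA : A.IsHermitian) :
    A.det = ∏ i, hA.eigenvalues i := by
  simpa using hA.det_eq_prod_eigenvalues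

lemma unitary_conj_det (U : Matrix.unitaryGroup n ℝ) (D : Matrix n n ℝ) :
    ((U : Matrix n n ℝ) * D * star (U : Matrix n n ℝ)).det = D.det := by
  rw [Matrix.det_mul, Matrix.det_mul, mul_comm, ← mul_assoc, ← Matrix.det_mul,
    (Matrix.mem_unitaryGroup_iff').mp U.2, Matrix.det_one, one_mul]

lemma det_one_add_eq {A : Matrix n n ℝ} (hA : A.IsHermitian) :
    (1 + A).det = ∏ i, (1 + hA.eigenvalues i) := by
  have h1 : (1 : Matrix n n ℝ) = hA.eigenvectorUnitary.1 * 1 * star hA.eigenvectorUnitary.1 := by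
    rw [Matrix.mul_one, (Matrix.mem_unitaryGroup_iff).mp hA.eigenvectorUnitary.2]
  have key : 1 + A = hA.eigenvectorUnitary.1 *
      diagonal (fun i => 1 + hA.eigenvalues i) * star hA.eigenvectorUnitary.1 := by
    conv_lhs => rw [real_spectral hA, h1]
    rw [← Matrix.add_mul, ← Matrix.mul_add, ← Matrix.diagonal_one, Matrix.diagonal_add]
  rw [key, unitary_conj_det, Matrix.det_diagonal]

lemma eig_all_one {A : Matrix n n ℝ} (hA : A.IsHermitian)
    (h : ∀ i, hA.eigenvalues i = 1) : A = 1 := by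
  conv_lhs => rw [real_spectral hA]
  have : Matrix.diagonal hA.eigenvalues = 1 := by
    have h2 : hA.eigenvalues = fun _ => 1 := funext h
    rw [h2, Matrix.diagonal_one]
  rw [this, Matrix.mul_one, (Matrix.mem_unitaryGroup_iff).mp hA.eigenvectorUnitary.2]

lemma log_det_midpoint {X Y : Matrix n n ℝ} (hX : X.PosDef) (hY : Y.PosDef) (hne : X ≠ Y) :
    (Real.log X.det + Real.log Y.det) / 2 < Real.log (((2:ℝ)⁻¹) • (X + Y)).det := by
  set B := hX.posSemidef.sqrt with hBdef
  have hB : B.PosDef := posDef_sqrt hX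
  have hBB : B * B = X := hX.posSemidef.sqrt_mul_self
  have hBdet : IsUnit B.det := hB.det_pos.ne'.isUnit
  have hBH : Bᴴ = B := hB.1
  have hBiH : (B⁻¹)ᴴ = B⁻¹ := hB.inv.1
  have hBidet : IsUnit (B⁻¹).det := hB.inv.det_pos.ne'.isUnit
  set M := B⁻¹ * Y * B⁻¹ with hMdef
  have hM : M.PosDef := by
    have := posdef_conj hY hBidet
    rwa [hBiH] at this
  set ν := hM.1.eigenvalues with hνdef
  have hν : ∀ i, 0 < ν i := hM.eigenvalues_pos
  have hBBi : B * B⁻¹ = 1 := Matrix.mul_nonsing_inv B hBdet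
  have hBiB : B⁻¹ * B = 1 := Matrix.nonsing_inv_mul B hBdet
  have hYBMB : Y = B * M * B := by
    rw [hMdef]
    calc Y = (B * B⁻¹) * Y * (B⁻¹ * B) := by rw [hBBi, hBiB, Matrix.one_mul, Matrix.mul_one]
    _ = B * (B⁻¹ * Y * B⁻¹) * B := by noncomm_ring
  have hZ : ((2:ℝ)⁻¹) • (X + Y) = B * (((2:ℝ)⁻¹) • (1 + M)) * B := by
    rw [Matrix.mul_smul, Matrix.smul_mul, Matrix.mul_add, Matrix.add_mul,
      Matrix.mul_one, hBB, ← hYBMB]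
  have detX : X.det = B.det * B.det := by rw [← hBB, Matrix.det_mul]
  have detY : Y.det = B.det * M.det * B.det := by rw [hYBMB, Matrix.det_mul, Matrix.det_mul]
  have detM : M.det = ∏ i, ν i := det_eq_prod_eig hM.1
  have det1M : (1 + M).det = ∏ i, (1 + ν i) := det_one_add_eq hM.1
  have detZ : (((2:ℝ)⁻¹) • (X + Y)).det = X.det * ∏ i, ((2:ℝ)⁻¹ * (1 + ν i)) := by
    rw [hZ, Matrix.det_mul, Matrix.det_mul, Matrix.det_smul, det1M, detX]
    rw [Finset.prod_mul_distrib, Finset.prod_const]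
    simp [Finset.card_univ]
    ring
  -- not all ν i = 1
  have hMne : ∃ i, ν i ≠ 1 := by
    by_contra hc
    push_neg at hc
    exact hne (by rw [← hBB, hYBMB, eig_all_one hM.1 hc, Matrix.mul_one])
  -- AM-GM
  have amgm : ∏ i, Real.sqrt (ν i) < ∏ i, ((2:ℝ)⁻¹ * (1 + ν i)) := by
    refine Finset.prod_lt_prod (fun i _ => Real.sqrt_pos.mpr (hν i)) (fun i _ => ?_) ?_
    · nlinarith [Real.sq_sqrt (hν i).le, sq_nonneg (Real.sqrt (ν i) - 1)]
    · obtain ⟨i, hi⟩ := hMne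
      refine ⟨i, Finset.mem_univ i, ?_⟩
      have h1 : Real.sqrt (ν i) ≠ 1 := by
        intro h
        apply hi
        have := congrArg (fun t => t ^ 2) h
        simpa [Real.sq_sqrt (hν i).le] using this
      have h2 : 0 < (Real.sqrt (ν i) - 1) ^ 2 := by
        have h3 := sub_ne_zero.mpr h1
        positivity
      nlinarith [Real.sq_sqrt (hν i).le, h2]
  have sqrtprod : ∏ i, Real.sqrt (ν i) = Real.sqrt (M.det) := by
    rw [detM]
    rw [← Real.sqrt_sq (Finset.prod_nonneg fun i _ => Real.sqrt_nonneg (ν i))]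
    congr 1
    rw [← Finset.prod_pow]
    exact Finset.prod_congr rfl fun i _ => (Real.sq_sqrt (hν i).le)
  have hXdetpos := hX.det_pos
  have hYdetpos := hY.det_pos
  have hMdetpos := hM.det_pos
  have key : Real.sqrt (X.det * Y.det) < (((2:ℝ)⁻¹) • (X + Y)).det := by
    have hYX : Y.det = X.det * M.det := by rw [detY, detX]; ring
    have h1 : Real.sqrt (X.det * Y.det) = X.det * Real.sqrt M.det := by
      rw [hYX, show X.det * (X.det * M.det) = X.det ^ 2 * M.det by ring,
        Real.sqrt_mul (sq_nonneg _), Real.sqrt_sq hXdetpos.le]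
    calc Real.sqrt (X.det * Y.det) = X.det * Real.sqrt (M.det) := h1
    _ = X.det * ∏ i, Real.sqrt (ν i) := by rw [sqrtprod]
    _ < X.det * ∏ i, ((2:ℝ)⁻¹ * (1 + ν i)) := by
        exact (mul_lt_mul_iff_right₀ hXdetpos).mpr amgm
    _ = (((2:ℝ)⁻¹) • (X + Y)).det := detZ.symm
  have hsq : 0 < Real.sqrt (X.det * Y.det) := Real.sqrt_pos.mpr (by positivity)
  have := Real.log_lt_log hsq key
  rw [Real.log_sqrt (by positivity), Real.log_mul hXdetpos.ne' hYdetpos.ne'] at this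
  linarith

lemma psd_diag_nonneg {M : Matrix n n ℝ} (hM : M.PosSemidef) (i : n) : 0 ≤ M i i := by
  have := hM.dotProduct_mulVec_nonneg (Pi.single i 1)
  simpa [dotProduct, Matrix.mulVec, Pi.single_apply, Finset.sum_ite_eq,
    Finset.sum_ite_eq'] using this

lemma psd_trace_nonneg {M : Matrix n n ℝ} (hM : M.PosSemidef) : 0 ≤ M.trace := by
  exact Finset.sum_nonneg fun i _ => psd_diag_nonneg hM i

lemma trace_mul_nonneg {S X : Matrix n n ℝ} (hS : S.PosSemidef) (hX : X.PosSemidef) :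
    0 ≤ (S * X).trace := by
  obtain ⟨A, hA⟩ : ∃ A : Matrix n n ℝ, S = Aᴴ * A :=
    ⟨hS.sqrt, by rw [Matrix.PosSemidef.sqrt_conjTranspose, Matrix.PosSemidef.sqrt_mul_self]⟩
  rw [hA, Matrix.mul_assoc, Matrix.trace_mul_comm]
  have h2 : (A * X * Aᴴ).PosSemidef := hX.mul_mul_conjTranspose_same A
  exact psd_trace_nonneg h2

lemma posDef_smul {W : Matrix n n ℝ} (hW : W.PosDef) {t : ℝ} (ht : 0 < t) :
    (t • W).PosDef := by
  refine Matrix.PosDef.of_dotProduct_mulVec_pos ?_ fun x hx => ?_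
  · unfold Matrix.IsHermitian
    rw [Matrix.conjTranspose_smul, hW.1]
    simp
  · have := hW.dotProduct_mulVec_pos hx
    rw [Matrix.smul_mulVec, dotProduct_smul]
    exact mul_pos ht this

lemma isClosed_posSemidef : IsClosed {M : Matrix n n ℝ | M.PosSemidef} := by
  have : {M : Matrix n n ℝ | M.PosSemidef} =
      {M | Mᴴ = M} ∩ ⋂ x : n → ℝ, {M | 0 ≤ dotProduct (star x) (M *ᵥ x)} := by
    ext M
    simp only [Set.mem_setOf_eq, Set.mem_inter_iff, Set.mem_iInter]
    exact Matrix.posSemidef_iff_dotProduct_mulVec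
  rw [this]
  refine IsClosed.inter ?_ (isClosed_iInter fun x => ?_)
  · exact isClosed_eq (continuous_id.matrix_conjTranspose) continuous_id
  · exact isClosed_le continuous_const
      ((continuous_const).dotProduct ((continuous_id.matrix_mulVec continuous_const)))

lemma psd_smul {W : Matrix n n ℝ} (hW : W.PosSemidef) {t : ℝ} (ht : 0 ≤ t) :
    (t • W).PosSemidef := by
  refine Matrix.PosSemidef.of_dotProduct_mulVec_nonneg ?_ fun x => ?_
  · unfold Matrix.IsHermitian
    rw [Matrix.conjTranspose_smul, hW.1]
    simp
  · have := hW.dotProduct_mulVec_nonneg x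
    rw [Matrix.smul_mulVec, dotProduct_smul]
    exact mul_nonneg ht this

/-- Weighted elementwise ℓ1 norm `‖X‖_{1,Λ} = Σᵢⱼ Λᵢⱼ|Xᵢⱼ|`. -/
noncomputable def norm1 {p : ℕ} (Λ X : Matrix (Fin p) (Fin p) ℝ) : ℝ :=
  ∑ i, ∑ j, Λ i j * |X i j|

/-- The regularized negative log-likelihood `f(X) = −log det X + tr(SX) + ‖X‖_{1,Λ}`. -/
noncomputable def fobj {p : ℕ} (S Λ X : Matrix (Fin p) (Fin p) ℝ) : ℝ :=
  -Real.log X.det + Matrix.trace (S * X) + norm1 Λ X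

section Main

variable {p : ℕ}

attribute [local instance] Matrix.normedAddCommGroup Matrix.normedSpace

lemma norm1_nonneg {Λ X : Matrix (Fin p) (Fin p) ℝ} (hΛ : ∀ i j, (0:ℝ) ≤ Λ i j) :
    0 ≤ norm1 Λ X :=
  Finset.sum_nonneg fun i _ => Finset.sum_nonneg fun j _ =>
    mul_nonneg (hΛ i j) (abs_nonneg _)

lemma norm1_smul (Λ X : Matrix (Fin p) (Fin p) ℝ) {t : ℝ} (ht : 0 ≤ t) :
    norm1 Λ (t • X) = t * norm1 Λ X := by
  simp only [norm1, Finset.mul_sum]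
  refine Finset.sum_congr rfl fun i _ => Finset.sum_congr rfl fun j _ => ?_
  rw [Matrix.smul_apply, smul_eq_mul, abs_mul, abs_of_nonneg ht]
  ring

lemma trace_smul_eq (S X : Matrix (Fin p) (Fin p) ℝ) (t : ℝ) :
    (S * (t • X)).trace = t * (S * X).trace := by
  rw [Matrix.mul_smul, Matrix.trace_smul, smul_eq_mul]

lemma gfun_pos {S Λ X : Matrix (Fin p) (Fin p) ℝ}
    (hSd : ∀ i, 0 < S i i) (hΛoff : ∀ i j, i ≠ j → 0 < Λ i j) (hΛnn : ∀ i j, (0:ℝ) ≤ Λ i j)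
    (hS : S.PosSemidef) (hX : X.PosSemidef) (hX0 : X ≠ 0) :
    0 < (S * X).trace + norm1 Λ X := by
  by_cases hoff : ∃ i j, i ≠ j ∧ X i j ≠ 0
  · obtain ⟨i, j, hij, hXij⟩ := hoff
    have h0 : 0 < Λ i j * |X i j| :=
      mul_pos (hΛoff i j hij) (abs_pos.mpr hXij)
    have h1 : Λ i j * |X i j| ≤ ∑ j', Λ i j' * |X i j'| :=
      Finset.single_le_sum (fun j' _ => mul_nonneg (hΛnn i j') (abs_nonneg _))
        (Finset.mem_univ j)
    have h2 : (∑ j', Λ i j' * |X i j'|) ≤ norm1 Λ X :=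
      Finset.single_le_sum
        (fun i' _ => Finset.sum_nonneg fun j' _ => mul_nonneg (hΛnn i' j') (abs_nonneg _))
        (Finset.mem_univ i)
    have h3 : 0 < norm1 Λ X := lt_of_lt_of_le h0 (h1.trans h2)
    have h4 : 0 ≤ (S * X).trace := trace_mul_nonneg hS hX
    linarith
  · push_neg at hoff
    have hdiag : ∃ i, X i i ≠ 0 := by
      by_contra hc
      push_neg at hc
      apply hX0
      ext i j
      by_cases h : i = j
      · subst h; simpa using hc i
      · simpa using hoff i j h
    obtain ⟨i, hi⟩ := hdiag
    have htr : (S * X).trace = ∑ k, S k k * X k k := by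
      rw [Matrix.trace]
      refine Finset.sum_congr rfl fun k _ => ?_
      rw [Matrix.diag_apply, Matrix.mul_apply]
      exact Finset.sum_eq_single k (fun l _ hlk => by rw [hoff l k hlk, mul_zero]) (by simp)
    have htrpos : 0 < (S * X).trace := by
      rw [htr]
      refine Finset.sum_pos' (fun k _ => mul_nonneg (hSd k).le (psd_diag_nonneg hX k)) ?_
      exact ⟨i, Finset.mem_univ i,
        mul_pos (hSd i) (lt_of_le_of_ne (psd_diag_nonneg hX i) (Ne.symm hi))⟩
    have h4 : 0 ≤ norm1 Λ X := norm1_nonneg hΛnn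
    linarith

lemma exists_coercive_const {S Λ : Matrix (Fin p) (Fin p) ℝ}
    (hS : S.PosSemidef) (hSd : ∀ i, 0 < S i i)
    (hΛoff : ∀ i j, i ≠ j → 0 < Λ i j) (hΛnn : ∀ i j, (0:ℝ) ≤ Λ i j) :
    ∃ c : ℝ, 0 < c ∧ ∀ X : Matrix (Fin p) (Fin p) ℝ, X.PosSemidef →
      c * ‖X‖ ≤ (S * X).trace + norm1 Λ X := by
  set g : Matrix (Fin p) (Fin p) ℝ → ℝ := fun X => (S * X).trace + norm1 Λ X with hg
  have hgcont : Continuous g := by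
    refine Continuous.add ?_ ?_
    · exact (continuous_const.matrix_mul continuous_id).matrix_trace
    · refine continuous_finset_sum _ fun i _ => continuous_finset_sum _ fun j _ => ?_
      exact continuous_const.mul (continuous_id.matrix_elem i j).abs
  have hghom : ∀ (t : ℝ), 0 ≤ t → ∀ X, g (t • X) = t * g X := by
    intro t ht X
    rw [hg]
    simp only
    rw [trace_smul_eq, norm1_smul Λ X ht]
    ring
  set Sph := {X : Matrix (Fin p) (Fin p) ℝ | X.PosSemidef ∧ ‖X‖ = 1} with hSph
  have hSphclosed : IsClosed Sph := by
    have : Sph = {X : Matrix (Fin p) (Fin p) ℝ | X.PosSemidef} ∩ {X | ‖X‖ = 1} := by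
      ext X; simp [hSph, Set.mem_setOf_eq]
    rw [this]
    exact isClosed_posSemidef.inter (isClosed_eq continuous_norm continuous_const)
  have hSphbdd : Bornology.IsBounded Sph := by
    refine (Metric.isBounded_closedBall (x := (0 : Matrix (Fin p) (Fin p) ℝ)) (r := 1)).subset ?_
    intro X hX
    rw [Metric.mem_closedBall, dist_zero_right]
    exact hX.2.le
  have hcompact : IsCompact Sph := Metric.isCompact_of_isClosed_isBounded hSphclosed hSphbdd
  by_cases hne : Sph.Nonempty
  · obtain ⟨X₀, hX₀, hmin⟩ := hcompact.exists_isMinOn hne hgcont.continuousOn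
    have hc : 0 < g X₀ := by
      apply gfun_pos hSd hΛoff hΛnn hS hX₀.1
      intro h0
      rw [h0] at hX₀
      simpa using hX₀.2
    refine ⟨g X₀, hc, fun X hXpsd => ?_⟩
    by_cases hX0 : X = 0
    · subst hX0
      simp [hg, norm1]
    · have ht : 0 < ‖X‖ := norm_pos_iff.mpr hX0
      have hY : (‖X‖⁻¹ • X) ∈ Sph := by
        constructor
        · exact psd_smul hXpsd (by positivity)
        · rw [norm_smul, Real.norm_eq_abs, abs_of_pos (by positivity)]
          field_simp
      have h1 : g X₀ ≤ g (‖X‖⁻¹ • X) := hmin hY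
      have h2 : g (‖X‖⁻¹ • X) = ‖X‖⁻¹ * g X := hghom _ (by positivity) X
      rw [h2] at h1
      calc g X₀ * ‖X‖ ≤ (‖X‖⁻¹ * g X) * ‖X‖ := by nlinarith
      _ = g X := by field_simp
  · refine ⟨1, one_pos, fun X hXpsd => ?_⟩
    by_cases hX0 : X = 0
    · subst hX0; simp [hg, norm1]
    · exfalso
      apply hne
      have ht : 0 < ‖X‖ := norm_pos_iff.mpr hX0
      refine ⟨‖X‖⁻¹ • X, psd_smul hXpsd (by positivity), ?_⟩
      rw [norm_smul, Real.norm_eq_abs, abs_of_pos (by positivity)]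
      field_simp

set_option maxHeartbeats 2000000 in
/-- If `S ⪰ 0` has positive diagonal and `Λ` has positive
off-diagonal entries (nonnegative diagonal), then
`f(X) = −log det X + tr(SX) + ‖X‖_{1,Λ}` has a unique minimizer over the cone of
symmetric positive definite matrices. -/
theorem exists_unique_minimizer {p : ℕ} (S Λ : Matrix (Fin p) (Fin p) ℝ)
    (hS : S.PosSemidef) (hSd : ∀ i, 0 < S i i)
    (hΛs : Λ.IsSymm) (hΛoff : ∀ i j, i ≠ j → 0 < Λ i j) (hΛd : ∀ i, 0 ≤ Λ i i) :
    ∃! Xstar : Matrix (Fin p) (Fin p) ℝ, Xstar.PosDef ∧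
      ∀ Y : Matrix (Fin p) (Fin p) ℝ, Y.PosDef → fobj S Λ Xstar ≤ fobj S Λ Y := by
  classical
  have hΛnn : ∀ i j, (0:ℝ) ≤ Λ i j := by
    intro i j
    by_cases h : i = j
    · subst h; exact hΛd i
    · exact (hΛoff i j h).le
  set F : ℝ := fobj S Λ 1 with hF
  obtain ⟨c, hc, hcoer⟩ := exists_coercive_const hS hSd hΛoff hΛnn
  set q : ℝ := (p : ℝ) with hq
  have hq0 : 0 ≤ q := Nat.cast_nonneg p
  set a : ℝ := c / (2 * (q + 1) ^ 2) with ha'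
  have ha : 0 < a := by positivity
  set R : ℝ := max 1 ((2 / c) * (F + q * a + q * |Real.log a| + q + 1)) with hR'
  have hR1 : (1:ℝ) ≤ R := le_max_left _ _
  -- entry/trace bounds
  have htrace_le : ∀ X : Matrix (Fin p) (Fin p) ℝ, X.trace ≤ q * ‖X‖ := by
    intro X
    rw [Matrix.trace]
    calc ∑ i, X.diag i ≤ ∑ _i : Fin p, ‖X‖ := by
          refine Finset.sum_le_sum fun i _ => ?_
          have h1 := Matrix.norm_entry_le_entrywise_sup_norm X (i := i) (j := i)
          rw [Real.norm_eq_abs] at h1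
          exact (le_abs_self _).trans h1
    _ = q * ‖X‖ := by rw [Finset.sum_const, Finset.card_univ]; simp [hq, nsmul_eq_mul]
  have heig_le : ∀ (X : Matrix (Fin p) (Fin p) ℝ) (hX : X.PosDef) (i : Fin p),
      hX.1.eigenvalues i ≤ q * ‖X‖ := by
    intro X hX i
    have h1 : hX.1.eigenvalues i ≤ ∑ j, hX.1.eigenvalues j :=
      Finset.single_le_sum (fun j _ => (hX.eigenvalues_pos j).le) (Finset.mem_univ i)
    rw [← trace_eq_sum_eig hX.1] at h1
    exact h1.trans (htrace_le X)
  have hdet_le : ∀ (X : Matrix (Fin p) (Fin p) ℝ) (hX : X.PosDef),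
      X.det ≤ (q * ‖X‖ + 1) ^ p := by
    intro X hX
    rw [det_eq_prod_eig hX.1]
    calc ∏ i, hX.1.eigenvalues i ≤ ∏ _i : Fin p, (q * ‖X‖ + 1) := by
          refine Finset.prod_le_prod (fun i _ => (hX.eigenvalues_pos i).le) fun i _ => ?_
          have := heig_le X hX i
          linarith
    _ = (q * ‖X‖ + 1) ^ p := by rw [Finset.prod_const, Finset.card_univ, Fintype.card_fin]
  have hgnonneg : ∀ X : Matrix (Fin p) (Fin p) ℝ, X.PosSemidef →
      0 ≤ (S * X).trace + norm1 Λ X := by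
    intro X hX
    have := trace_mul_nonneg hS hX
    have := norm1_nonneg (Λ := Λ) (X := X) hΛnn
    linarith
  -- norm bound on the sublevel set
  have hnormbound : ∀ X : Matrix (Fin p) (Fin p) ℝ, X.PosDef → fobj S Λ X ≤ F → ‖X‖ ≤ R := by
    intro X hX hXF
    have hT : (1:ℝ) ≤ q * ‖X‖ + 1 := by
      have : 0 ≤ q * ‖X‖ := mul_nonneg hq0 (norm_nonneg X)
      linarith
    have hlog1 : Real.log X.det ≤ q * Real.log (q * ‖X‖ + 1) := by
      calc Real.log X.det ≤ Real.log ((q * ‖X‖ + 1) ^ p) :=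
            Real.log_le_log hX.det_pos (hdet_le X hX)
      _ = q * Real.log (q * ‖X‖ + 1) := by rw [Real.log_pow]
    have hlog2 : Real.log (q * ‖X‖ + 1) ≤ a * (q * ‖X‖ + 1) - 1 - Real.log a := by
      have h1 : Real.log (a * (q * ‖X‖ + 1)) ≤ a * (q * ‖X‖ + 1) - 1 :=
        Real.log_le_sub_one_of_pos (by positivity)
      rw [Real.log_mul ha.ne' (by linarith)] at h1
      linarith
    have hcX : c * ‖X‖ ≤ (S * X).trace + norm1 Λ X := hcoer X hX.posSemidef
    have hfX : fobj S Λ X = -Real.log X.det + (S * X).trace + norm1 Λ X := rfl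
    have key : c * ‖X‖ - q * (a * (q * ‖X‖ + 1) - 1 - Real.log a) ≤ F := by
      have h2 : q * Real.log (q * ‖X‖ + 1) ≤ q * (a * (q * ‖X‖ + 1) - 1 - Real.log a) :=
        mul_le_mul_of_nonneg_left hlog2 hq0
      have h3 : Real.log X.det ≤ q * (a * (q * ‖X‖ + 1) - 1 - Real.log a) := hlog1.trans h2
      have h4 : fobj S Λ X ≤ F := hXF
      rw [hfX] at h4
      linarith
    have haq : a * q ^ 2 ≤ c / 2 := by
      rw [ha']
      rw [div_mul_eq_mul_div, div_le_div_iff₀ (by positivity) (by norm_num)]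
      nlinarith [sq_nonneg q, hq0, hc.le]
    have habs1 : Real.log a ≤ |Real.log a| := le_abs_self _
    have habs2 : -|Real.log a| ≤ Real.log a := neg_abs_le _
    have hXn : 0 ≤ ‖X‖ := norm_nonneg X
    have key2 : (c / 2) * ‖X‖ ≤ F + q * a + q * |Real.log a| + q + 1 := by
      have expand : c * ‖X‖ - q * (a * (q * ‖X‖ + 1) - 1 - Real.log a)
          = c * ‖X‖ - (a * q ^ 2) * ‖X‖ - q * a + q + q * Real.log a := by ring
      nlinarith [mul_le_mul_of_nonneg_right haq hXn,
        mul_le_mul_of_nonneg_left habs2 hq0]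
    have hRge : (2 / c) * (F + q * a + q * |Real.log a| + q + 1) ≤ R := le_max_right _ _
    have hFpos : 0 ≤ F + q * a + q * |Real.log a| + q + 1 := by nlinarith
    calc ‖X‖ = (2 / c) * ((c / 2) * ‖X‖) := by field_simp
    _ ≤ (2 / c) * (F + q * a + q * |Real.log a| + q + 1) := by
        have : 0 ≤ 2 / c := by positivity
        nlinarith
    _ ≤ R := hRge
  -- determinant lower bound on the sublevel set
  have hdetlb : ∀ X : Matrix (Fin p) (Fin p) ℝ, X.PosDef → fobj S Λ X ≤ F →
      Real.exp (-F) ≤ X.det := by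
    intro X hX hXF
    have h1 : -Real.log X.det ≤ F := by
      have h2 := hgnonneg X hX.posSemidef
      have hfX : fobj S Λ X = -Real.log X.det + (S * X).trace + norm1 Λ X := rfl
      rw [hfX] at hXF
      linarith
    calc Real.exp (-F) ≤ Real.exp (Real.log X.det) := Real.exp_le_exp.mpr (by linarith)
    _ = X.det := Real.exp_log hX.det_pos
  set T₀ : ℝ := q * R + 1 with hT₀'
  have hT₀ : (1:ℝ) ≤ T₀ := by
    have : 0 ≤ q * R := mul_nonneg hq0 (by linarith)
    simp only [hT₀']
    linarith
  set α : ℝ := min (Real.exp (-F) / T₀ ^ p) 1 with hα'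
  have hαpos : 0 < α := lt_min (by positivity) one_pos
  have hα1 : α ≤ 1 := min_le_right _ _
  -- eigenvalue lower bound on the sublevel set
  have heiglb : ∀ (X : Matrix (Fin p) (Fin p) ℝ) (hX : X.PosDef), fobj S Λ X ≤ F →
      ∀ i, α ≤ hX.1.eigenvalues i := by
    intro X hX hXF i
    have hXR : ‖X‖ ≤ R := hnormbound X hX hXF
    have hμT : ∀ j, hX.1.eigenvalues j ≤ T₀ := by
      intro j
      have h1 := heig_le X hX j
      have h2 : q * ‖X‖ ≤ q * R := mul_le_mul_of_nonneg_left hXR hq0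
      simp only [hT₀']
      linarith
    have hprod : ∏ j ∈ Finset.univ.erase i, hX.1.eigenvalues j ≤ T₀ ^ p := by
      calc ∏ j ∈ Finset.univ.erase i, hX.1.eigenvalues j
          ≤ ∏ _j ∈ Finset.univ.erase i, T₀ :=
            Finset.prod_le_prod (fun j _ => (hX.eigenvalues_pos j).le) (fun j _ => hμT j)
      _ = T₀ ^ (Finset.univ.erase i).card := (Finset.prod_const T₀)
      _ ≤ T₀ ^ p := by
          refine pow_le_pow_right₀ hT₀ ?_
          calc (Finset.univ.erase i).card ≤ Finset.univ.card := Finset.card_le_card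
                (Finset.erase_subset _ _)
          _ = p := by rw [Finset.card_univ, Fintype.card_fin]
    have hdet : X.det = hX.1.eigenvalues i * ∏ j ∈ Finset.univ.erase i, hX.1.eigenvalues j := by
      rw [det_eq_prod_eig hX.1, Finset.mul_prod_erase _ _ (Finset.mem_univ i)]
    have h1 : Real.exp (-F) ≤ hX.1.eigenvalues i * T₀ ^ p := by
      calc Real.exp (-F) ≤ X.det := hdetlb X hX hXF
      _ ≤ hX.1.eigenvalues i * T₀ ^ p := by
          rw [hdet]
          exact mul_le_mul_of_nonneg_left hprod (hX.eigenvalues_pos i).le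
    have h2 : Real.exp (-F) / T₀ ^ p ≤ hX.1.eigenvalues i := by
      rw [div_le_iff₀ (by positivity)] at *
      linarith
    exact le_trans (min_le_left _ _) h2
  -- the compact set
  set K : Set (Matrix (Fin p) (Fin p) ℝ) :=
    {X | (X - α • 1).PosSemidef ∧ ‖X‖ ≤ R} with hK'
  have hKPD : ∀ X ∈ K, X.PosDef := by
    intro X hXK
    have h1 : ((α : ℝ) • (1 : Matrix (Fin p) (Fin p) ℝ)).PosDef :=
      posDef_smul Matrix.PosDef.one hαpos
    have h2 := Matrix.PosDef.posSemidef_add hXK.1 h1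
    rwa [sub_add_cancel] at h2
  have hKsub : ∀ X : Matrix (Fin p) (Fin p) ℝ, X.PosDef → fobj S Λ X ≤ F → X ∈ K := by
    intro X hX hXF
    exact ⟨sub_smul_one_posSemidef hX.1 (heiglb X hX hXF), hnormbound X hX hXF⟩
  have hKclosed : IsClosed K := by
    have : K = ((fun X : Matrix (Fin p) (Fin p) ℝ => X - α • 1) ⁻¹'
        {M | M.PosSemidef}) ∩ {X | ‖X‖ ≤ R} := by
      ext X; simp [hK', Set.mem_setOf_eq]
    rw [this]
    exact ((isClosed_posSemidef.preimage (continuous_id.sub continuous_const)).inter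
      (isClosed_le continuous_norm continuous_const))
  have hKbdd : Bornology.IsBounded K := by
    refine (Metric.isBounded_closedBall (x := (0 : Matrix (Fin p) (Fin p) ℝ)) (r := R)).subset ?_
    intro X hX
    rw [Metric.mem_closedBall, dist_zero_right]
    exact hX.2
  have hKcompact : IsCompact K := Metric.isCompact_of_isClosed_isBounded hKclosed hKbdd
  have hK1 : (1 : Matrix (Fin p) (Fin p) ℝ) ∈ K := by
    constructor
    · have h1 : (1 : Matrix (Fin p) (Fin p) ℝ) - α • 1 = (1 - α) • 1 := by
        rw [sub_smul, one_smul]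
      rw [h1]
      exact psd_smul Matrix.PosDef.one.posSemidef (by linarith)
    · have h2 : ‖(1 : Matrix (Fin p) (Fin p) ℝ)‖ ≤ 1 := by
        refine (Matrix.norm_le_iff zero_le_one).mpr fun i j => ?_
        rw [Matrix.one_apply]
        split <;> simp
      linarith
  have hKcont : ContinuousOn (fobj S Λ) K := by
    intro X hXK
    refine ContinuousAt.continuousWithinAt ?_
    have h1 : ContinuousAt (fun X : Matrix (Fin p) (Fin p) ℝ => -Real.log X.det) X := by
      have h2 : ContinuousAt Real.log (Matrix.det X) :=
        Real.continuousAt_log (hKPD X hXK).det_pos.ne'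
      exact (h2.comp (continuous_id.matrix_det.continuousAt)).neg
    have h3 : Continuous (fun X : Matrix (Fin p) (Fin p) ℝ => (S * X).trace + norm1 Λ X) := by
      refine Continuous.add ?_ ?_
      · exact (continuous_const.matrix_mul continuous_id).matrix_trace
      · exact continuous_finset_sum _ fun i _ => continuous_finset_sum _ fun j _ =>
          continuous_const.mul (continuous_id.matrix_elem i j).abs
    have h4 : fobj S Λ = fun X : Matrix (Fin p) (Fin p) ℝ =>
        -Real.log X.det + ((S * X).trace + norm1 Λ X) := by
      funext W
      simp [fobj, add_assoc]
    rw [h4]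
    exact h1.add h3.continuousAt
  obtain ⟨Xstar, hXstarK, hmin⟩ := hKcompact.exists_isMinOn ⟨1, hK1⟩ hKcont
  have hXstarPD : Xstar.PosDef := hKPD Xstar hXstarK
  have hstarF : fobj S Λ Xstar ≤ F := hmin hK1
  have hglobal : ∀ Y : Matrix (Fin p) (Fin p) ℝ, Y.PosDef → fobj S Λ Xstar ≤ fobj S Λ Y := by
    intro Y hY
    rcases le_or_gt (fobj S Λ Xstar) (fobj S Λ Y) with h | h
    · exact h
    · have hYF : fobj S Λ Y ≤ F := by linarith
      exact absurd (hmin (hKsub Y hY hYF)) (not_le.mpr h)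
  refine ⟨Xstar, ⟨hXstarPD, hglobal⟩, ?_⟩
  rintro Y ⟨hYPD, hYmin⟩
  by_contra hne
  have heq : fobj S Λ Y = fobj S Λ Xstar :=
    le_antisymm (hYmin Xstar hXstarPD) (hglobal Y hYPD)
  set Z : Matrix (Fin p) (Fin p) ℝ := (2⁻¹ : ℝ) • (Y + Xstar) with hZ'
  have hZPD : Z.PosDef := posDef_smul (hYPD.add hXstarPD) (by norm_num)
  have hlogZ : (Real.log Y.det + Real.log Xstar.det) / 2 < Real.log Z.det :=
    log_det_midpoint hYPD hXstarPD hne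
  have htrZ : (S * Z).trace = 2⁻¹ * ((S * Y).trace + (S * Xstar).trace) := by
    rw [hZ', trace_smul_eq, Matrix.mul_add, Matrix.trace_add]
  have hn1Z : norm1 Λ Z ≤ 2⁻¹ * (norm1 Λ Y + norm1 Λ Xstar) := by
    have expand : 2⁻¹ * (norm1 Λ Y + norm1 Λ Xstar)
        = ∑ i, ∑ j, (2⁻¹ * (Λ i j * |Y i j|) + 2⁻¹ * (Λ i j * |Xstar i j|)) := by
      simp only [norm1, mul_add, Finset.mul_sum, Finset.sum_add_distrib]
    rw [expand, norm1]
    refine Finset.sum_le_sum fun i _ => Finset.sum_le_sum fun j _ => ?_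
    have hZij : Z i j = 2⁻¹ * (Y i j + Xstar i j) := by
      simp [hZ', Matrix.add_apply]
      ring
    rw [hZij]
    have habs : |2⁻¹ * (Y i j + Xstar i j)| ≤ 2⁻¹ * |Y i j| + 2⁻¹ * |Xstar i j| := by
      rw [abs_mul]
      rw [abs_of_nonneg (by norm_num : (0:ℝ) ≤ 2⁻¹)]
      have := abs_add_le (Y i j) (Xstar i j)
      nlinarith [abs_nonneg (Y i j + Xstar i j)]
    nlinarith [hΛnn i j, abs_nonneg (Y i j), abs_nonneg (Xstar i j)]
  have hfZ : fobj S Λ Z < fobj S Λ Xstar := by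
    have e1 : fobj S Λ Z = -Real.log Z.det + (S * Z).trace + norm1 Λ Z := rfl
    have e2 : fobj S Λ Y = -Real.log Y.det + (S * Y).trace + norm1 Λ Y := rfl
    have e3 : fobj S Λ Xstar = -Real.log Xstar.det + (S * Xstar).trace + norm1 Λ Xstar := rfl
    rw [e1, e3]
    rw [e2, e3] at heq
    rw [htrZ]
    linarith
  exact absurd (hglobal Z hZPD) (by linarith)
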